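/- Let A be an algebra over a complete local ring, e an idempotent in A such that the corner algebra eAe is local, and π: A → B a surjective algebra homomorphism. If π(e) = e_1 + e_2 with e_1, e_2 orthogonal idempotents in B satisfying π(e)·e_1 = e_1 and π(e)·e_2 = e_2, and there exists a lift ẽ_1 ∈ A with π(ẽ_1) = e_1, then e_1 = π(e) or e_2 = π(e) (i.e. the idempotent π(e) does not split nontrivially within the image of the corner). More precisely: the element e·ẽ_1·e lies in the local ring eAe, hence is either a unit or in the maximal ideal; if it is a unit then e_1 = π(e), and if e·ẽ_2·e is a unit (ẽ_2 := e - ẽ_1 appropriately) then e_2 = π(e). -/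

import Mathlib

noncomputable section

/-- `x` is a unit of the corner ring `eAe` (with unit `e`). -/
def IsCornerUnit {A : Type*} [Ring A] (e x : A) : Prop :=
  ∃ y : A, e * y * e = y ∧ x * y = e ∧ y * x = e

/-- The corner ring `eAe` is local: every element of the corner is a unit of
the corner, or its complement `e - x` is. -/
def CornerLocal {A : Type*} [Ring A] (e : A) : Prop :=
  ∀ x : A, e * x * e = x → (IsCornerUnit e x ∨ IsCornerUnit e (e - x))

/-- Let `e` be an idempotent in a ring `A` whose corner ring `eAe` is local,
and `π : A → B` a surjective ring homomorphism. If `π(e) = e₁ + e₂` with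
`e₁, e₂` orthogonal idempotents satisfying `π(e)·eᵢ = eᵢ`, and `e₁` admits a
lift `etilde₁` along `π`, then `e₁ = π(e)` or `e₂ = π(e)`: the idempotent `π(e)`
does not split nontrivially. -/
theorem corner_local_idempotent_no_split {A B : Type*} [Ring A] [Ring B]
    (π : A →+* B) (hπ : Function.Surjective π)
    (e : A) (he : e * e = e) (hloc : CornerLocal e)
    (e₁ e₂ : B) (he₁ : e₁ * e₁ = e₁) (he₂ : e₂ * e₂ = e₂)
    (horth : e₁ * e₂ = 0 ∧ e₂ * e₁ = 0)
    (hsum : π e = e₁ + e₂)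
    (habs₁ : π e * e₁ = e₁) (habs₂ : π e * e₂ = e₂)
    (etilde₁ : A) (hlift : π etilde₁ = e₁) :
    e₁ = π e ∨ e₂ = π e := by
  set x := e * etilde₁ * e with hxdef
  have hx : e * x * e = x := by
    rw [hxdef]
    have h4 : e * (e * etilde₁ * e) * e = e * e * etilde₁ * (e * e) := by
      noncomm_ring
    rw [h4, he]
  have he₁π : e₁ * π e = e₁ := by
    rw [hsum, mul_add, he₁, horth.1, add_zero]
  have hπx : π x = e₁ := by
    simp only [hxdef, map_mul, hlift]
    rw [habs₁, he₁π]
  rcases hloc x hx with ⟨y, _, hxy, _⟩ | ⟨y, _, hxy, _⟩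
  · left
    have h1 : e₁ * π y = π e := by
      have := congrArg π hxy
      rw [map_mul, hπx] at this
      exact this
    have h2 : e₂ = 0 := by
      have := congrArg (e₂ * ·) h1
      rw [← mul_assoc, horth.2, zero_mul, hsum, mul_add, horth.2, he₂, zero_add] at this
      exact this.symm
    rw [hsum, h2, add_zero]
  · right
    have hπex : π (e - x) = e₂ := by
      rw [map_sub, hπx, hsum]; abel
    have h1 : e₂ * π y = π e := by
      have := congrArg π hxy
      rw [map_mul, hπex] at this
      exact this
    have h2 : e₁ = 0 := by
      have := congrArg (e₁ * ·) h1
      rw [← mul_assoc, horth.1, zero_mul, hsum, mul_add, horth.1, he₁, add_zero] at this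
      exact this.symm
    rw [hsum, h2, zero_add]
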